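/- Let C ∈ ℝ^{(n+m)×r} with n+m > r have full rank r, and let J = diag(I_n, −I_m). Consider the linear map Γ : M ↦ J M C defined on the space of skew-symmetric (n+m)×(n+m) matrices. Then the kernel of Γ, i.e. {M skew-symmetric : M C = 0}, has dimension (n+m−r)(n+m−r−1)/2, and hence rank Γ = (n+m)r − r(r+1)/2. -/

import Mathlib

open Matrix

/-- `J = diag(I_n, -I_m)`. -/
def J10 (n m : ℕ) : Matrix (Fin n ⊕ Fin m) (Fin n ⊕ Fin m) ℝ :=
  Matrix.fromBlocks 1 0 0 (-1)

/-- The linear map `M ↦ Mᵀ + M`, whose kernel is the space of skew-symmetric matrices. -/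
def transAdd10 (n m : ℕ) :
    Matrix (Fin n ⊕ Fin m) (Fin n ⊕ Fin m) ℝ →ₗ[ℝ] Matrix (Fin n ⊕ Fin m) (Fin n ⊕ Fin m) ℝ where
  toFun M := Mᵀ + M
  map_add' M N := by simp [Matrix.transpose_add]; abel
  map_smul' a M := by simp [Matrix.transpose_smul]

/-- The linear map `M ↦ M C`. -/
def mulRight10 (n m r : ℕ) (C : Matrix (Fin n ⊕ Fin m) (Fin r) ℝ) :
    Matrix (Fin n ⊕ Fin m) (Fin n ⊕ Fin m) ℝ →ₗ[ℝ] Matrix (Fin n ⊕ Fin m) (Fin r) ℝ where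
  toFun M := M * C
  map_add' M N := Matrix.add_mul M N C
  map_smul' a M := by simp [Matrix.smul_mul]

/-- The linear map `Γ : M ↦ J M C`. -/
def gamma10 (n m r : ℕ) (C : Matrix (Fin n ⊕ Fin m) (Fin r) ℝ) :
    Matrix (Fin n ⊕ Fin m) (Fin n ⊕ Fin m) ℝ →ₗ[ℝ] Matrix (Fin n ⊕ Fin m) (Fin r) ℝ where
  toFun M := J10 n m * M * C
  map_add' M N := by simp [Matrix.mul_add, Matrix.add_mul]
  map_smul' a M := by simp [Matrix.mul_smul, Matrix.smul_mul]


/-- The submodule of skew-symmetric matrices. -/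
def skewS (ι : Type*) [Fintype ι] [DecidableEq ι] : Submodule ℝ (Matrix ι ι ℝ) where
  carrier := {M | Mᵀ + M = 0}
  add_mem' := by
    intro a b ha hb
    simp only [Set.mem_setOf_eq, Matrix.transpose_add] at *
    rw [show aᵀ + bᵀ + (a + b) = (aᵀ + a) + (bᵀ + b) by abel, ha, hb, add_zero]
  zero_mem' := by simp
  smul_mem' := by
    intro c a ha
    simp only [Set.mem_setOf_eq, Matrix.transpose_smul] at *
    rw [← smul_add, ha, smul_zero]

lemma mem_skewS {ι : Type*} [Fintype ι] [DecidableEq ι] {M : Matrix ι ι ℝ} :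
    M ∈ skewS ι ↔ Mᵀ + M = 0 := Iff.rfl

lemma skew_apply {ι : Type*} [Fintype ι] [DecidableEq ι] {M : Matrix ι ι ℝ}
    (h : M ∈ skewS ι) (i j : ι) : M j i = - M i j := by
  have h2 : Mᵀ i j + M i j = 0 := congrFun (congrFun h i) j
  rw [Matrix.transpose_apply] at h2
  linarith

/-- pairs i < j equiv sigma -/
def pairEquiv (k : ℕ) : {p : Fin k × Fin k // p.1 < p.2} ≃ (Σ j : Fin k, Fin j) where
  toFun p := ⟨p.1.2, ⟨p.1.1, p.2⟩⟩
  invFun q := ⟨(⟨q.2, lt_trans q.2.2 q.1.2⟩, q.1), q.2.2⟩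
  left_inv p := by ext <;> rfl
  right_inv q := by ext <;> rfl

lemma card_pairs (k : ℕ) :
    Fintype.card {p : Fin k × Fin k // p.1 < p.2} = k * (k - 1) / 2 := by
  rw [Fintype.card_congr (pairEquiv k), Fintype.card_sigma]
  simp only [Fintype.card_fin]
  rw [show (∑ x : Fin k, (x : ℕ)) = ∑ i ∈ Finset.range k, i from
    Fin.sum_univ_eq_sum_range (fun i => i) k, Finset.sum_range_id]

noncomputable def skewEquivFun (k : ℕ) :
    skewS (Fin k) ≃ₗ[ℝ] ({p : Fin k × Fin k // p.1 < p.2} → ℝ) := by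
  refine LinearEquiv.ofBijective
    { toFun := fun M p => M.1 p.1.1 p.1.2
      map_add' := fun M N => rfl
      map_smul' := fun c M => rfl } ⟨?_, ?_⟩
  · intro M N h
    ext i j
    rcases lt_trichotomy i j with hij | hij | hij
    · exact congrFun h ⟨(i, j), hij⟩
    · subst hij
      have h1 := skew_apply M.2 i i
      have h2 := skew_apply N.2 i i
      linarith
    · have h1 := skew_apply M.2 j i
      have h2 := skew_apply N.2 j i
      have h3 : M.1 j i = N.1 j i := congrFun h ⟨(j, i), hij⟩
      rw [h1, h2, h3]
  · intro f
    refine ⟨⟨fun i j => if h : i < j then f ⟨(i, j), h⟩ else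
        if h' : j < i then -f ⟨(j, i), h'⟩ else 0, ?_⟩, ?_⟩
    · ext i j
      simp only [Matrix.add_apply, Matrix.transpose_apply, Matrix.zero_apply]
      show (if h : j < i then f ⟨(j, i), h⟩ else if h' : i < j then -f ⟨(i, j), h'⟩ else 0) + (if h : i < j then f ⟨(i, j), h⟩ else if h' : j < i then -f ⟨(j, i), h'⟩ else 0) = 0
      rcases lt_trichotomy i j with hij | hij | hij
      · rw [dif_neg (asymm hij), dif_pos hij, dif_pos hij]; ring
      · subst hij
        rw [dif_neg (lt_irrefl i), dif_neg (lt_irrefl i)]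
        ring
      · rw [dif_pos hij, dif_neg (asymm hij), dif_pos hij]; ring
    · ext p
      exact dif_pos p.2

lemma finrank_skew_fin (k : ℕ) :
    Module.finrank ℝ (skewS (Fin k)) = k * (k - 1) / 2 := by
  rw [(skewEquivFun k).finrank_eq, Module.finrank_pi, card_pairs]

lemma map_reindex_skewS {ι κ : Type*} [Fintype ι] [DecidableEq ι] [Fintype κ] [DecidableEq κ]
    (e : ι ≃ κ) :
    (skewS ι).map (Matrix.reindexLinearEquiv ℝ ℝ e e : Matrix ι ι ℝ →ₗ[ℝ] Matrix κ κ ℝ)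
      = skewS κ := by
  ext N
  simp only [Submodule.mem_map, mem_skewS]
  constructor
  · rintro ⟨M, hM, rfl⟩
    ext i j
    simp only [LinearEquiv.coe_coe, Matrix.reindexLinearEquiv_apply, Matrix.reindex_apply,
      Matrix.add_apply, Matrix.transpose_apply, Matrix.submatrix_apply, Matrix.zero_apply]
    have := congrFun (congrFun hM (e.symm j)) (e.symm i)
    simp only [Matrix.add_apply, Matrix.transpose_apply, Matrix.zero_apply] at this
    linarith
  · intro hN
    refine ⟨N.submatrix e e, ?_, ?_⟩
    · ext i j
      have := congrFun (congrFun hN (e j)) (e i)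
      simp only [Matrix.add_apply, Matrix.transpose_apply, Matrix.zero_apply] at this
      simp only [Matrix.add_apply, Matrix.transpose_apply, Matrix.zero_apply,
        Matrix.submatrix_apply]
      linarith
    · ext i j
      simp [Matrix.reindexLinearEquiv_apply, Matrix.reindex_apply]

lemma finrank_skewS (ι : Type*) [Fintype ι] [DecidableEq ι] :
    Module.finrank ℝ (skewS ι) = Fintype.card ι * (Fintype.card ι - 1) / 2 := by
  rw [← finrank_skew_fin (Fintype.card ι), ← map_reindex_skewS (Fintype.equivFin ι),
    LinearEquiv.finrank_map_eq]

/-- Right multiplication by a fixed matrix, generic version. -/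
def mulRightL {ι κ : Type*} [Fintype ι] (C : Matrix ι κ ℝ) :
    Matrix ι ι ℝ →ₗ[ℝ] Matrix ι κ ℝ where
  toFun M := M * C
  map_add' M N := Matrix.add_mul M N C
  map_smul' a M := by simp [Matrix.smul_mul]

/-- Matrices whose `inl`-columns vanish. -/
def zeroColsS (r s : ℕ) : Submodule ℝ (Matrix (Fin r ⊕ Fin s) (Fin r ⊕ Fin s) ℝ) where
  carrier := {N | ∀ a i, N a (Sum.inl i) = 0}
  add_mem' := by intro a b ha hb x i; simp [Matrix.add_apply, ha x i, hb x i]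
  zero_mem' := by intro a i; rfl
  smul_mem' := by intro c N hN a i; simp [Matrix.smul_apply, hN a i]

noncomputable def blockEquiv (r s : ℕ) :
    ↥(skewS (Fin r ⊕ Fin s) ⊓ zeroColsS r s) ≃ₗ[ℝ] ↥(skewS (Fin s)) where
  toFun N := ⟨Matrix.of fun a b => N.1 (Sum.inr a) (Sum.inr b), by
    have hsk := N.2.1
    ext a b
    have := congrFun (congrFun hsk (Sum.inr a)) (Sum.inr b)
    simpa using this⟩
  invFun S := ⟨Matrix.fromBlocks 0 0 0 S.1, by
    constructor
    · have hsk := S.2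
      ext x y
      rcases x with x | x <;> rcases y with y | y
      · simp
      · simp
      · simp
      · have h2 := congrFun (congrFun hsk y) x
        simp only [Matrix.add_apply, Matrix.transpose_apply, Matrix.zero_apply] at h2
        simp only [Matrix.add_apply, Matrix.transpose_apply, Matrix.zero_apply,
          Matrix.fromBlocks_apply₂₂]
        linarith
    · intro a i
      rcases a with a | a <;> rfl⟩
  map_add' N N' := by ext a b; rfl
  map_smul' c N := by ext a b; rfl
  left_inv N := by
    ext x y
    rcases x with x | x <;> rcases y with y | y
    · exact (N.2.2 (Sum.inl x) y).symm
    · have h3 := skew_apply N.2.1 (Sum.inr y) (Sum.inl x)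
      show (0 : Matrix (Fin r) (Fin s) ℝ) x y = N.1 (Sum.inl x) (Sum.inr y)
      rw [h3, N.2.2 (Sum.inr y) x, neg_zero]
      rfl
    · exact (N.2.2 (Sum.inr x) y).symm
    · rfl
  right_inv S := by ext a b; rfl

lemma finrank_skew_zeroCols (r s : ℕ) :
    Module.finrank ℝ ↥(skewS (Fin r ⊕ Fin s) ⊓ zeroColsS r s) = s * (s-1)/2 := by
  rw [(blockEquiv r s).finrank_eq, finrank_skewS, Fintype.card_fin]

/-- Conjugation `M ↦ Pᵀ M P` as a linear equivalence. -/
noncomputable def conjE {ι : Type*} [Fintype ι] [DecidableEq ι] (P : Matrix ι ι ℝ)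
    [Invertible P] : Matrix ι ι ℝ ≃ₗ[ℝ] Matrix ι ι ℝ :=
  LinearEquiv.ofLinear
    { toFun := fun M => Pᵀ * M * P
      map_add' := fun M N => by noncomm_ring
      map_smul' := fun c M => by simp [Matrix.mul_smul, Matrix.smul_mul] }
    { toFun := fun N => ⅟Pᵀ * N * ⅟P
      map_add' := fun M N => by noncomm_ring
      map_smul' := fun c M => by simp [Matrix.mul_smul, Matrix.smul_mul] }
    (by
      apply LinearMap.ext; intro N
      show Pᵀ * (⅟Pᵀ * N * ⅟P) * P = N
      calc Pᵀ * (⅟Pᵀ * N * ⅟P) * P = (Pᵀ * ⅟Pᵀ) * N * (⅟P * P) := by noncomm_ring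
      _ = N := by rw [mul_invOf_self, invOf_mul_self, one_mul, Matrix.mul_one])
    (by
      apply LinearMap.ext; intro N
      show ⅟Pᵀ * (Pᵀ * N * P) * ⅟P = N
      calc ⅟Pᵀ * (Pᵀ * N * P) * ⅟P = (⅟Pᵀ * Pᵀ) * N * (P * ⅟P) := by noncomm_ring
      _ = N := by rw [invOf_mul_self, mul_invOf_self, one_mul, Matrix.mul_one])

lemma conjE_apply {ι : Type*} [Fintype ι] [DecidableEq ι] (P : Matrix ι ι ℝ)
    [Invertible P] (M : Matrix ι ι ℝ) : conjE P M = Pᵀ * M * P := rfl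

lemma map_conj {ι : Type*} [Fintype ι] [DecidableEq ι] (r s : ℕ)
    (eκ : (Fin r ⊕ Fin s) ≃ ι) (P : Matrix ι ι ℝ) [Invertible P]
    (C : Matrix ι (Fin r) ℝ) (hPC : ∀ v i, P v (eκ (Sum.inl i)) = C v i) :
    (skewS ι ⊓ LinearMap.ker (mulRightL C)).map
      (((conjE P).trans (Matrix.reindexLinearEquiv ℝ ℝ eκ.symm eκ.symm)
          : Matrix ι ι ℝ ≃ₗ[ℝ] Matrix (Fin r ⊕ Fin s) (Fin r ⊕ Fin s) ℝ)
        : Matrix ι ι ℝ →ₗ[ℝ] Matrix (Fin r ⊕ Fin s) (Fin r ⊕ Fin s) ℝ)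
      = skewS (Fin r ⊕ Fin s) ⊓ zeroColsS r s := by
  set Φ := (conjE P).trans (Matrix.reindexLinearEquiv ℝ ℝ eκ.symm eκ.symm) with hΦdef
  have hΦapp : ∀ M : Matrix ι ι ℝ, Φ M = (Pᵀ * M * P).submatrix eκ eκ := by
    intro M
    ext a b
    simp [hΦdef, conjE_apply, Matrix.reindexLinearEquiv_apply, Matrix.reindex_apply]
  have hcol : ∀ (M : Matrix ι ι ℝ) (x : ι) (i : Fin r),
      (M * P) x (eκ (Sum.inl i)) = (M * C) x i := by
    intro M x i
    simp only [Matrix.mul_apply]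
    exact Finset.sum_congr rfl fun v _ => by rw [hPC v i]
  have hskewconj : ∀ M : Matrix ι ι ℝ, (Pᵀ * M * P)ᵀ + Pᵀ * M * P = Pᵀ * (Mᵀ + M) * P := by
    intro M
    rw [Matrix.transpose_mul, Matrix.transpose_mul, Matrix.transpose_transpose]
    noncomm_ring
  ext N
  simp only [Submodule.mem_map, Submodule.mem_inf, mem_skewS, LinearMap.mem_ker]
  constructor
  · rintro ⟨M, ⟨hsk, hker⟩, rfl⟩
    have hker' : M * C = 0 := hker
    constructor
    · show (Φ M)ᵀ + Φ M = 0
      rw [hΦapp]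
      ext a b
      have h0 : (Pᵀ * M * P)ᵀ + Pᵀ * M * P = 0 := by
        rw [hskewconj, hsk, Matrix.mul_zero, Matrix.zero_mul]
      have := congrFun (congrFun h0 (eκ a)) (eκ b)
      simp only [Matrix.add_apply, Matrix.transpose_apply, Matrix.zero_apply] at this ⊢
      simpa [Matrix.submatrix_apply] using this
    · intro a i
      show (Φ M) a (Sum.inl i) = 0
      rw [hΦapp]
      have : (Pᵀ * M * P) (eκ a) (eκ (Sum.inl i)) = (Pᵀ * M * C) (eκ a) i := hcol _ _ _
      rw [Matrix.submatrix_apply, this, Matrix.mul_assoc, hker', Matrix.mul_zero]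
      rfl
  · rintro ⟨hsk, hcols⟩
    refine ⟨Φ.symm N, ⟨?_, ?_⟩, Φ.apply_symm_apply N⟩
    · set M := Φ.symm N with hM
      have hΦM : Φ M = N := Φ.apply_symm_apply N
      have hPMP : Pᵀ * M * P = N.submatrix eκ.symm eκ.symm := by
        rw [hΦapp] at hΦM
        have := congrArg (fun X => Matrix.submatrix X eκ.symm eκ.symm) hΦM
        simpa [Matrix.submatrix_submatrix, Equiv.symm_comp_self] using this
      have h0 : Pᵀ * (Mᵀ + M) * P = 0 := by
        rw [← hskewconj, hPMP]
        ext x y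
        have := congrFun (congrFun hsk (eκ.symm x)) (eκ.symm y)
        simp only [Matrix.add_apply, Matrix.transpose_apply, Matrix.zero_apply,
          Matrix.submatrix_apply] at this ⊢
        exact this
      have := (conjE P).symm_apply_apply (Mᵀ + M)
      rw [show (conjE P) (Mᵀ + M) = Pᵀ * (Mᵀ + M) * P from rfl, h0] at this
      rw [← this]
      show ⅟Pᵀ * (0 : Matrix ι ι ℝ) * ⅟P = 0
      rw [Matrix.mul_zero, Matrix.zero_mul]
    · set M := Φ.symm N with hM
      have hΦM : Φ M = N := Φ.apply_symm_apply N
      have hPMP : Pᵀ * M * P = N.submatrix eκ.symm eκ.symm := by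
        rw [hΦapp] at hΦM
        have := congrArg (fun X => Matrix.submatrix X eκ.symm eκ.symm) hΦM
        simpa [Matrix.submatrix_submatrix, Equiv.symm_comp_self] using this
      show M * C = 0
      have hPMC : Pᵀ * (M * C) = 0 := by
        ext x i
        have h1 : (Pᵀ * M * P) x (eκ (Sum.inl i)) = (Pᵀ * M * C) x i := hcol _ _ _
        rw [hPMP] at h1
        have h2 : N.submatrix eκ.symm eκ.symm x (eκ (Sum.inl i)) = 0 := by
          rw [Matrix.submatrix_apply, Equiv.symm_apply_apply]
          exact hcols _ i
        rw [← Matrix.mul_assoc, h1.symm, h2]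
        rfl
      calc M * C = ⅟Pᵀ * Pᵀ * (M * C) := by rw [invOf_mul_self, Matrix.one_mul]
      _ = ⅟Pᵀ * (Pᵀ * (M * C)) := by rw [Matrix.mul_assoc]
      _ = 0 := by rw [hPMC, Matrix.mul_zero]

lemma key_finrank {ι : Type*} [Fintype ι] [DecidableEq ι] (r : ℕ) (hr : r ≤ Fintype.card ι)
    (C : Matrix ι (Fin r) ℝ) (hrank : C.rank = r) :
    Module.finrank ℝ ↥(skewS ι ⊓ LinearMap.ker (mulRightL C)) =
      (Fintype.card ι - r) * (Fintype.card ι - r - 1) / 2 := by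
  set s := Fintype.card ι - r with hs
  -- columns of C are linearly independent
  have hker : LinearMap.ker C.mulVecLin = ⊥ := by
    have h1 := LinearMap.finrank_range_add_finrank_ker C.mulVecLin
    rw [show Module.finrank ℝ (LinearMap.range C.mulVecLin) = r from hrank] at h1
    rw [Module.finrank_pi, Fintype.card_fin] at h1
    have : Module.finrank ℝ (LinearMap.ker C.mulVecLin) = 0 := by omega
    exact Submodule.finrank_eq_zero.mp this
  set c : Fin r → (ι → ℝ) := fun i => C.mulVecLin (Pi.single i 1) with hc
  have hli : LinearIndependent ℝ c := by
    have h1 := (Pi.basisFun ℝ (Fin r)).linearIndependent.map' C.mulVecLin hker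
    have h2 : c = ⇑C.mulVecLin ∘ ⇑(Pi.basisFun ℝ (Fin r)) := by
      funext i
      simp [hc, Pi.basisFun_apply]
    rwa [h2]
  have hcC : ∀ i v, c i v = C v i := by
    intro i v
    simp [hc, Matrix.mulVecLin_apply, Matrix.mulVec_single]
  set W := Submodule.span ℝ (Set.range c) with hW
  have hWrank : Module.finrank ℝ W = r := by
    rw [hW, finrank_span_eq_card hli, Fintype.card_fin]
  obtain ⟨W', hcompl⟩ := Submodule.exists_isCompl W
  have hW'rank : Module.finrank ℝ W' = s := by
    have := Submodule.finrank_add_eq_of_isCompl hcompl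
    rw [hWrank, Module.finrank_pi] at this
    omega
  let bW : Module.Basis (Fin r) ℝ W := Module.Basis.span hli
  let bW' : Module.Basis (Fin s) ℝ W' := Module.finBasisOfFinrankEq ℝ W' hW'rank
  let b0 : Module.Basis (Fin r ⊕ Fin s) ℝ (ι → ℝ) :=
    (bW.prod bW').map (Submodule.prodEquivOfIsCompl W W' hcompl)
  have hb0 : ∀ i, b0 (Sum.inl i) = c i := by
    intro i
    simp only [b0, Module.Basis.map_apply, Module.Basis.prod_apply, Sum.elim_inl, Function.comp_apply,
      LinearMap.inl_apply]
    rw [Submodule.coe_prodEquivOfIsCompl']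
    simp only [ZeroMemClass.coe_zero, add_zero]
    exact congrArg Subtype.val (Module.Basis.span_apply hli i)
  have hrs : r + s = Fintype.card ι := by omega
  let eκ : (Fin r ⊕ Fin s) ≃ ι :=
    (finSumFinEquiv.trans (finCongr hrs)).trans (Fintype.equivFin ι).symm
  let b1 : Module.Basis ι ℝ (ι → ℝ) := b0.reindex eκ
  let P : Matrix ι ι ℝ := (Pi.basisFun ℝ ι).toMatrix b1
  letI : Invertible P := (Pi.basisFun ℝ ι).invertibleToMatrix b1
  have hPC : ∀ v i, P v (eκ (Sum.inl i)) = C v i := by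
    intro v i
    show (Pi.basisFun ℝ ι).repr (b1 (eκ (Sum.inl i))) v = C v i
    rw [show b1 (eκ (Sum.inl i)) = b0 (Sum.inl i) by
      simp [b1, Module.Basis.reindex_apply, Equiv.symm_apply_apply]]
    rw [hb0 i]
    simp [Pi.basisFun_repr, hcC]
  rw [← LinearEquiv.finrank_map_eq
    ((conjE P).trans (Matrix.reindexLinearEquiv ℝ ℝ eκ.symm eκ.symm))
    (skewS ι ⊓ LinearMap.ker (mulRightL C)),
    map_conj r s eκ P C hPC, finrank_skew_zeroCols]

set_option synthInstance.maxHeartbeats 1000000 in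
/-- if `C ∈ ℝ^{(n+m)×r}` with `n+m > r` has full rank `r`, the kernel
`{M skew-symmetric : M C = 0}` of `Γ : M ↦ J M C` (restricted to skew-symmetric matrices)
has dimension `(n+m-r)(n+m-r-1)/2`, and hence `rank Γ = (n+m)r - r(r+1)/2`. -/
theorem stmt10 (n m r : ℕ) (hr : r < n + m) (C : Matrix (Fin n ⊕ Fin m) (Fin r) ℝ)
    (hrank : C.rank = r) :
    Module.finrank ℝ
        ↥(LinearMap.ker (transAdd10 n m) ⊓ LinearMap.ker (mulRight10 n m r C))
      = (n + m - r) * (n + m - r - 1) / 2 ∧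
    Module.finrank ℝ
        ↥(Submodule.map (gamma10 n m r C) (LinearMap.ker (transAdd10 n m)))
      = (n + m) * r - r * (r + 1) / 2 := by
  classical
  have h1 : LinearMap.ker (transAdd10 n m) = skewS (Fin n ⊕ Fin m) := by
    ext M; exact Iff.rfl
  have h2 : LinearMap.ker (mulRight10 n m r C) = LinearMap.ker (mulRightL C) := by
    ext M; exact Iff.rfl
  have hcard : Fintype.card (Fin n ⊕ Fin m) = n + m := by simp
  have hr' : r ≤ Fintype.card (Fin n ⊕ Fin m) := by omega
  have part1 : Module.finrank ℝ
      ↥(LinearMap.ker (transAdd10 n m) ⊓ LinearMap.ker (mulRight10 n m r C))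
      = (n + m - r) * (n + m - r - 1) / 2 := by
    rw [h1, h2, key_finrank r hr' C hrank, hcard]
  refine ⟨part1, ?_⟩
  -- J10 squares to one
  have hJJ : J10 n m * J10 n m = 1 := by
    simp [J10, Matrix.fromBlocks_multiply, Matrix.fromBlocks_one]
  have hkereq : LinearMap.ker (gamma10 n m r C) = LinearMap.ker (mulRight10 n m r C) := by
    ext M
    simp only [LinearMap.mem_ker]
    constructor
    · intro h
      show M * C = 0
      have : J10 n m * (J10 n m * M * C) = 0 := by
        rw [show gamma10 n m r C M = J10 n m * M * C from rfl] at h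
        rw [h, Matrix.mul_zero]
      calc M * C = (J10 n m * J10 n m) * (M * C) := by rw [hJJ, Matrix.one_mul]
      _ = J10 n m * (J10 n m * M * C) := by
          rw [Matrix.mul_assoc, Matrix.mul_assoc]
      _ = 0 := this
    · intro h
      show J10 n m * M * C = 0
      have hMC : M * C = 0 := h
      rw [Matrix.mul_assoc, hMC, Matrix.mul_zero]
  set p := LinearMap.ker (transAdd10 n m) with hp
  set f := gamma10 n m r C with hf
  have hrn := LinearMap.finrank_range_add_finrank_ker (f.domRestrict p)
  rw [LinearMap.range_domRestrict, LinearMap.ker_domRestrict] at hrn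
  have hcomap : Module.finrank ℝ ↥(Submodule.comap p.subtype (LinearMap.ker f))
      = Module.finrank ℝ ↥(p ⊓ LinearMap.ker f) := by
    rw [← Submodule.map_comap_subtype]
    exact (Submodule.equivMapOfInjective p.subtype (Submodule.injective_subtype p)
      (Submodule.comap p.subtype (LinearMap.ker f))).finrank_eq
  rw [hcomap] at hrn
  have hinfval : Module.finrank ℝ ↥(p ⊓ LinearMap.ker f)
      = (n + m - r) * (n + m - r - 1) / 2 := by
    rw [hf, hkereq]
    exact part1
  have hpval : Module.finrank ℝ ↥p = (n + m) * ((n + m) - 1) / 2 := by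
    rw [h1, finrank_skewS, hcard]
  rw [hinfval, hpval] at hrn
  -- arithmetic
  set a := Module.finrank ℝ ↥(Submodule.map f p) with ha
  have hev : ∀ k : ℕ, 2 * (k * (k - 1) / 2) = k * (k - 1) := by
    intro k
    rcases k with _ | k
    · simp
    · have hE : Even ((k + 1) * k) := by
        simpa [Nat.mul_comm] using Nat.even_mul_succ_self k
      simp only [Nat.add_sub_cancel]
      obtain ⟨t, ht⟩ := hE
      rw [ht]
      omega
  have hev2 : 2 * (r * (r + 1) / 2) = r * (r + 1) := by
    obtain ⟨t, ht⟩ := Nat.even_mul_succ_self r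
    rw [ht]
    omega
  have p2A := hev (n + m)
  have p2b := hev (n + m - r)
  have hid : (n + m) * ((n + m) - 1) + r * (r + 1)
      = (n + m - r) * ((n + m - r) - 1) + 2 * ((n + m) * r) := by
    obtain ⟨t, ht⟩ : ∃ t, n + m - r = t + 1 := ⟨n + m - r - 1, by omega⟩
    have hN : n + m = r + t + 1 := by omega
    have hN1 : n + m - 1 = r + t := by omega
    rw [hN1, ht, hN]
    simp only [Nat.add_sub_cancel]
    ring
  obtain ⟨X, hX⟩ : ∃ X, (n + m) * ((n + m) - 1) = X := ⟨_, rfl⟩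
  obtain ⟨Y, hY⟩ : ∃ Y, (n + m - r) * ((n + m - r) - 1) = Y := ⟨_, rfl⟩
  obtain ⟨Z, hZ⟩ : ∃ Z, r * (r + 1) = Z := ⟨_, rfl⟩
  obtain ⟨U, hU⟩ : ∃ U, (n + m) * r = U := ⟨_, rfl⟩
  rw [hX] at hrn p2A hid
  rw [hY] at hrn p2b hid
  rw [hZ] at hev2 hid ⊢
  rw [hU] at hid ⊢
  omega
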